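/- Suppose the tail conditions (i)–(ii) hold. Then for every x ∈ B, setting N_1^x = ‖Y_1 x‖ = Σ_{i,j=1}^q ⟨e_i, X_1 e_j⟩ x_i, one has lim_{u→+∞} (u^α/L(u))·P[N_1^x > e^u] = c_+ and lim_{u→+∞} (u^α/L(u))·P[N_1^x ≤ e^{−u}] = c_−. Moreover, for all x ∈ B and all u > 0, (u^α/L(u))·P[N_1^x > e^u] ≤ (u^α/L(u))·P[N_1 > e^u] and (u^α/L(u))·P[N_1^x ≤ e^{−u}] ≤ (u^α/L(u))·P[V_1 ≤ e^{−u}]. -/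

import Mathlib

open MeasureTheory ProbabilityTheory Filter Topology Matrix Finset

noncomputable section

namespace StablePaper

/-- The set of `q × q` matrices. -/
abbrev Mat (q : ℕ) := Matrix (Fin q) (Fin q) ℝ

instance {q : ℕ} : MeasurableSpace (Mat q) := MeasurableSpace.pi

/-- Membership in the semigroup `S`: nonnegative entries, every row and every
column contains a strictly positive entry. -/
def memS {q : ℕ} (g : Mat q) : Prop :=
  (∀ i j, 0 ≤ g i j) ∧ (∀ i, ∃ j, 0 < g i j) ∧ (∀ j, ∃ i, 0 < g i j)

/-- Membership in `S°`: all entries strictly positive. -/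
def memS0 {q : ℕ} (g : Mat q) : Prop := ∀ i j, 0 < g i j

/-- The norm `‖x‖ = ∑ i, |x i|` on `ℝ^q`. -/
def nrm {q : ℕ} (x : Fin q → ℝ) : ℝ := ∑ i, |x i|

/-- The cone `C̄` of vectors with nonnegative coordinates. -/
def inCbar {q : ℕ} (x : Fin q → ℝ) : Prop := ∀ i, 0 ≤ x i

/-- `B̄`: unit vectors of `C̄`. -/
def inBbar {q : ℕ} (x : Fin q → ℝ) : Prop := inCbar x ∧ nrm x = 1

/-- `B`: unit vectors with strictly positive coordinates. -/
def inB {q : ℕ} (x : Fin q → ℝ) : Prop := (∀ i, 0 < x i) ∧ nrm x = 1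

/-- The projective action `g · x = gx / ‖gx‖`. -/
def proj {q : ℕ} (g : Mat q) (x : Fin q → ℝ) : Fin q → ℝ :=
  fun i => g.mulVec x i / nrm (g.mulVec x)

/-- `m(x,y) = min { x i / y i : y i > 0 }`. -/
def mfun {q : ℕ} (x y : Fin q → ℝ) : ℝ :=
  sInf ((fun i => x i / y i) '' {i | 0 < y i})

/-- The distance `d(x,y) = φ(m(x,y) m(y,x))` with `φ(s) = (1-s)/(1+s)`. -/
def dB {q : ℕ} (x y : Fin q → ℝ) : ℝ :=
  (1 - mfun x y * mfun y x) / (1 + mfun x y * mfun y x)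

/-- The cocycle `ξ(g,x) = ln ‖gx‖`. -/
def xi {q : ℕ} (g : Mat q) (x : Fin q → ℝ) : ℝ := Real.log (nrm (g.mulVec x))

/-- `X^{(n)} = X_n ⋯ X_1` (with `X^{(0)}` the identity matrix). -/
def Xprod {q : ℕ} {Ω : Type} (X : ℕ → Ω → Mat q) : ℕ → Ω → Mat q
  | 0 => fun _ => 1
  | n + 1 => fun ω => X (n + 1) ω * Xprod X n ω

/-- `Y^{(n)} = Y_1 ⋯ Y_n` where `Y_k = X_kᵀ`. -/
def Yprod {q : ℕ} {Ω : Type} (X : ℕ → Ω → Mat q) : ℕ → Ω → Mat q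
  | 0 => fun _ => 1
  | n + 1 => fun ω => Yprod X n ω * (X (n + 1) ω)ᵀ

/-- `Ỹ^{(n)} = Y_n ⋯ Y_1` where `Y_k = X_kᵀ`. -/
def Ytil {q : ℕ} {Ω : Type} (X : ℕ → Ω → Mat q) : ℕ → Ω → Mat q
  | 0 => fun _ => 1
  | n + 1 => fun ω => (X (n + 1) ω)ᵀ * Ytil X n ω

/-- The hitting time `T = inf { n ≥ 1 : X^{(n)} ∈ S° }` (equal to `⊤` if no such `n`). -/
def hitT {q : ℕ} {Ω : Type} (X : ℕ → Ω → Mat q) (ω : Ω) : ℕ∞ :=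
  ⨅ (n : ℕ) (_ : 1 ≤ n ∧ memS0 (Xprod X n ω)), (n : ℕ∞)

/-- The indicator `1_{[T ≤ n]}`. -/
def indT {q : ℕ} {Ω : Type} (X : ℕ → Ω → Mat q) (n : ℕ) (ω : Ω) : ℝ :=
  if hitT X ω ≤ (n : ℕ∞) then 1 else 0

/-- Condition (C). -/
def CondC {q : ℕ} {Ω : Type} [MeasurableSpace Ω] (P : Measure Ω)
    (X : ℕ → Ω → Mat q) : Prop :=
  0 < P {ω | ∃ n, 1 ≤ n ∧ memS0 (Xprod X n ω)}

/-- `(X_n)` is an i.i.d. sequence. -/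
def IID {q : ℕ} {Ω : Type} [MeasurableSpace Ω] (P : Measure Ω)
    (X : ℕ → Ω → Mat q) : Prop :=
  (∀ n, Measurable (X n)) ∧
  iIndepFun X P ∧
  ∀ n, Measure.map (X n) P = Measure.map (X 1) P

/-- `N₁`-functional of a matrix: the sum of all entries. -/
def N1fun {q : ℕ} (g : Mat q) : ℝ := ∑ i, ∑ j, g i j

/-- `V₁`-functional of a matrix: the minimal row sum. -/
def V1fun {q : ℕ} (g : Mat q) : ℝ := sInf {r : ℝ | ∃ i, r = ∑ j, g i j}

/-- The spectral radius of a real matrix (via its complex spectrum). -/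
def specRad {q : ℕ} (g : Mat q) : ℝ :=
  (spectralRadius ℂ (g.map (algebraMap ℝ ℂ))).toReal

/-- A slowly varying function `L : (0,∞) → (0,∞)`. -/
def SlowlyVarying (L : ℝ → ℝ) : Prop :=
  (∀ u : ℝ, 0 < u → 0 < L u) ∧
  ∀ l : ℝ, 0 < l → Tendsto (fun u => L (l * u) / L u) atTop (𝓝 1)

/-- Convolution of two measures on `ℝ`. -/
def mconv (ρ₁ ρ₂ : Measure ℝ) : Measure ℝ :=
  Measure.map (fun p : ℝ × ℝ => p.1 + p.2) (ρ₁.prod ρ₂)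

/-- `n`-fold convolution power. -/
def convPow (ρ : Measure ℝ) : ℕ → Measure ℝ
  | 0 => Measure.dirac 0
  | n + 1 => mconv (convPow ρ n) ρ

/-- A stable law of index `α`: a non-Dirac probability measure `ρ` such that for
every `n ≥ 1` there is `d_n ∈ ℝ` with `ρ^{*n}` equal to the image of `ρ` under
`x ↦ n^{1/α} x + d_n`. -/
def IsStableLaw (α : ℝ) (ρ : Measure ℝ) : Prop :=
  IsProbabilityMeasure ρ ∧ (¬ ∃ c : ℝ, ρ = Measure.dirac c) ∧
  ∀ n : ℕ, 1 ≤ n → ∃ d : ℝ,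
    convPow ρ n = Measure.map (fun x => (n : ℝ) ^ (1 / α) * x + d) ρ

/-- Convergence in distribution of real random variables to the law `ρ`. -/
def ConvInDistrib {Ω : Type} [MeasurableSpace Ω] (P : Measure Ω)
    (Z : ℕ → Ω → ℝ) (ρ : Measure ℝ) : Prop :=
  ∀ f : BoundedContinuousFunction ℝ ℝ,
    Tendsto (fun n => ∫ ω, f (Z n ω) ∂P) atTop (𝓝 (∫ x, f x ∂ρ))

/-- `μ^{(n)}`: the law of `Y^{(n)} = Y_1 ⋯ Y_n`. -/
def muN {q : ℕ} {Ω : Type} [MeasurableSpace Ω] (P : Measure Ω)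
    (X : ℕ → Ω → Mat q) (n : ℕ) : Measure (Mat q) :=
  Measure.map (fun ω => Yprod X n ω) P

/-- The contraction coefficient `c(g)`. -/
def cg {q : ℕ} (g : Mat q) : ℝ :=
  sSup {r : ℝ | ∃ x y, inBbar x ∧ inBbar y ∧ x ≠ y ∧
    r = dB (proj g x) (proj g y) / dB x y}

/-- The coefficient `c(μ^{(n)})`. -/
def cmu {q : ℕ} {Ω : Type} [MeasurableSpace Ω] (P : Measure Ω)
    (X : ℕ → Ω → Mat q) (n : ℕ) : ℝ :=
  sSup {r : ℝ | ∃ y y', inBbar y ∧ inBbar y' ∧ y ≠ y' ∧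
    r = ∫ g, dB (proj g y) (proj g y') / dB y y' ∂(muN P X n)}

/-- `κ(μ) = inf_{n ≥ 1} c(μ^{(n)})^{1/n}`. -/
def kappa {q : ℕ} {Ω : Type} [MeasurableSpace Ω] (P : Measure Ω)
    (X : ℕ → Ω → Mat q) : ℝ :=
  sInf {r : ℝ | ∃ n, 1 ≤ n ∧ r = cmu P X n ^ ((n : ℝ)⁻¹)}

/-- `ν` is `μ`-invariant. -/
def MuInvariant {q : ℕ} (μ : Measure (Mat q)) (ν : Measure (Fin q → ℝ)) : Prop :=
  ∀ f : BoundedContinuousFunction (Fin q → ℝ) ℝ,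
    ∫ x, (∫ g, f (proj g x) ∂μ) ∂ν = ∫ x, f x ∂ν

/-- The Fourier kernels `P_t` (so `P = P_0`). -/
def Ptop {q : ℕ} (μ : Measure (Mat q)) (t : ℝ) (f : (Fin q → ℝ) → ℂ)
    (x : Fin q → ℝ) : ℂ :=
  ∫ g, Complex.exp (Complex.I * (t : ℂ) * (xi g x : ℂ)) * f (proj g x) ∂μ

/-- The sup norm `‖f‖_u` over `B̄`. -/
def supnorm {q : ℕ} (f : (Fin q → ℝ) → ℂ) : ℝ :=
  sSup {r : ℝ | ∃ x, inBbar x ∧ r = ‖f x‖}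

/-- The Lipschitz seminorm `m(f)` with respect to the distance `d` on `B̄`. -/
def mlip {q : ℕ} (f : (Fin q → ℝ) → ℂ) : ℝ :=
  sSup {r : ℝ | ∃ x y, inBbar x ∧ inBbar y ∧ x ≠ y ∧
    r = ‖f x - f y‖ / dB x y}

/-- Membership in the space `L` of `d`-Lipschitz functions on `B̄`. -/
def memL {q : ℕ} (f : (Fin q → ℝ) → ℂ) : Prop :=
  ∃ M : ℝ, ∀ x y, inBbar x → inBbar y → ‖f x - f y‖ ≤ M * dB x y

/-- The norm `‖f‖_L = ‖f‖_u + m(f)`. -/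
def normL {q : ℕ} (f : (Fin q → ℝ) → ℂ) : ℝ := supnorm f + mlip f

/-- `‖g‖ = sup { ‖gx‖ : x ∈ B̄ }`. -/
def opg {q : ℕ} (g : Mat q) : ℝ :=
  sSup {r : ℝ | ∃ x, inBbar x ∧ r = nrm (g.mulVec x)}

/-- `v(g) = inf { ‖gx‖ : x ∈ B̄ }`. -/
def vg {q : ℕ} (g : Mat q) : ℝ :=
  sInf {r : ℝ | ∃ x, inBbar x ∧ r = nrm (g.mulVec x)}

/-- `ℓ(g) = |ln ‖g‖| + |ln v(g)|`. -/
def ellg {q : ℕ} (g : Mat q) : ℝ := |Real.log (opg g)| + |Real.log (vg g)|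

/-- `ε(t) = ∫ min(|t| ℓ(g), 2) dμ(g)`. -/
def epsT {q : ℕ} (μ : Measure (Mat q)) (t : ℝ) : ℝ :=
  ∫ g, min (|t| * ellg g) 2 ∂μ

/-- The operator norm of `P_t - P` on `L`. -/
def opNormDiff {q : ℕ} (μ : Measure (Mat q)) (t : ℝ) : ℝ :=
  sSup {r : ℝ | ∃ f : (Fin q → ℝ) → ℂ, memL f ∧ normL f ≤ 1 ∧
    r = normL (fun x => Ptop μ t f x - Ptop μ 0 f x)}


/-- Scaling lemma for tail functions under slow variation. -/
lemma tail_scale {α : ℝ} (hα0 : 0 < α) {L : ℝ → ℝ} (hL : SlowlyVarying L)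
    {T : ℝ → ℝ} {c : ℝ}
    (hT : Tendsto (fun u => u ^ α / L u * T u) atTop (𝓝 c))
    {l : ℝ} (hl : 0 < l) :
    Tendsto (fun u => u ^ α / L u * T (l * u)) atTop (𝓝 (c / l ^ α)) := by
  have h1 : Tendsto (fun u => (l*u) ^ α / L (l*u) * T (l*u)) atTop (𝓝 c) :=
    hT.comp (tendsto_id.const_mul_atTop hl)
  have h2 : Tendsto (fun u => L (l*u) / L u) atTop (𝓝 1) := hL.2 l hl
  have h3 : Tendsto (fun u => ((l*u) ^ α / L (l*u) * T (l*u)) * (L (l*u) / L u) * (l ^ α)⁻¹)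
      atTop (𝓝 (c * 1 * (l^α)⁻¹)) := (h1.mul h2).mul_const _
  have heq : ∀ᶠ u in atTop, ((l*u) ^ α / L (l*u) * T (l*u)) * (L (l*u) / L u) * (l ^ α)⁻¹
      = u ^ α / L u * T (l*u) := by
    filter_upwards [eventually_gt_atTop 0] with u hu
    have hLu := (hL.1 u hu).ne'
    have hLlu := (hL.1 (l*u) (by positivity)).ne'
    have hm : (l*u) ^ α = l ^ α * u ^ α := Real.mul_rpow hl.le hu.le
    have hla : (l:ℝ) ^ α ≠ 0 := by positivity
    field_simp [hm]
    rw [hm]; ring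
  simpa [div_eq_mul_inv] using h3.congr' heq

/-- Under the tail conditions (i)-(ii), for every `x ∈ B` the variable

`N₁^x = ‖Y₁x‖` has the same tail behaviour as `N₁`, with the uniform
domination stated in the proof of Proposition IV.1. -/
theorem statement18 {q : ℕ} (hq : 1 ≤ q) {Ω : Type} [MeasurableSpace Ω]
    (P : Measure Ω) [IsProbabilityMeasure P]
    (X1 : Ω → Mat q) (hmeas : Measurable X1) (hS : ∀ ω, memS (X1 ω))
    (α : ℝ) (hα0 : 0 < α) (hα2 : α ≤ 2)
    (L : ℝ → ℝ) (hL : SlowlyVarying L)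
    (hLunb : α = 2 → ∀ M : ℝ, ∃ u : ℝ, 0 < u ∧ M < L u)
    (cp cm : ℝ) (hcp : 0 ≤ cp) (hcm : 0 ≤ cm) (hcpm : 0 < cp + cm)
    (hi1 : Tendsto (fun u : ℝ =>
      u ^ α / L u * (P {ω | Real.exp u < N1fun (X1 ω)}).toReal) atTop (𝓝 cp))
    (hi2 : Tendsto (fun u : ℝ =>
      u ^ α / L u * (P {ω | N1fun (X1 ω) ≤ Real.exp (-u)}).toReal) atTop (𝓝 cm))
    (hii : ∃ M : ℝ, ∀ᶠ u in atTop,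
      u ^ α / L u * (P {ω | V1fun (X1 ω) ≤ Real.exp (-u)}).toReal ≤ M)
    (x : Fin q → ℝ) (hx : inB x) :
    Tendsto (fun u : ℝ => u ^ α / L u *
      (P {ω | Real.exp u < nrm ((X1 ω)ᵀ.mulVec x)}).toReal) atTop (𝓝 cp) ∧
    Tendsto (fun u : ℝ => u ^ α / L u *
      (P {ω | nrm ((X1 ω)ᵀ.mulVec x) ≤ Real.exp (-u)}).toReal) atTop (𝓝 cm) ∧
    (∀ u : ℝ, 0 < u →
      u ^ α / L u * (P {ω | Real.exp u < nrm ((X1 ω)ᵀ.mulVec x)}).toReal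
        ≤ u ^ α / L u * (P {ω | Real.exp u < N1fun (X1 ω)}).toReal) ∧
    (∀ u : ℝ, 0 < u →
      u ^ α / L u * (P {ω | nrm ((X1 ω)ᵀ.mulVec x) ≤ Real.exp (-u)}).toReal
        ≤ u ^ α / L u * (P {ω | V1fun (X1 ω) ≤ Real.exp (-u)}).toReal) := by
  obtain ⟨hxpos, hxnorm⟩ := hx
  have hne : (Finset.univ : Finset (Fin q)).Nonempty := ⟨⟨0, hq⟩, Finset.mem_univ _⟩
  set δ := Finset.univ.inf' hne x with hδdef
  have hδpos : 0 < δ := (Finset.lt_inf'_iff hne).mpr fun i _ => hxpos i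
  have hδle : ∀ i, δ ≤ x i := fun i => Finset.inf'_le x (Finset.mem_univ i)
  have hxle1 : ∀ j, x j ≤ 1 := by
    intro j
    calc x j = |x j| := (abs_of_nonneg (hxpos j).le).symm
    _ ≤ ∑ i, |x i| := Finset.single_le_sum (fun i _ => abs_nonneg (x i)) (Finset.mem_univ j)
    _ = 1 := hxnorm
  have hxsum : ∑ j, x j = 1 := by
    rw [← hxnorm]; exact Finset.sum_congr rfl fun i _ => (abs_of_nonneg (hxpos i).le).symm
  -- computation of N₁ˣ
  have hNxeq : ∀ ω, nrm ((X1 ω)ᵀ.mulVec x) = ∑ i, ∑ j, X1 ω j i * x j := by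
    intro ω
    refine Finset.sum_congr rfl fun i _ => ?_
    have h0 : (X1 ω)ᵀ.mulVec x i = ∑ j, X1 ω j i * x j := by
      simp [Matrix.mulVec, dotProduct, Matrix.transpose_apply]
    rw [h0, abs_of_nonneg (Finset.sum_nonneg fun j _ =>
      mul_nonneg ((hS ω).1 j i) (hxpos j).le)]
  -- the three comparison inequalities
  have ha : ∀ ω, nrm ((X1 ω)ᵀ.mulVec x) ≤ N1fun (X1 ω) := by
    intro ω
    rw [hNxeq]
    have h2 : N1fun (X1 ω) = ∑ i, ∑ j, X1 ω j i := by
      rw [N1fun]; exact Finset.sum_comm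
    rw [h2]
    refine Finset.sum_le_sum fun i _ => Finset.sum_le_sum fun j _ => ?_
    calc X1 ω j i * x j ≤ X1 ω j i * 1 :=
      mul_le_mul_of_nonneg_left (hxle1 j) ((hS ω).1 j i)
    _ = X1 ω j i := mul_one _
  have hb : ∀ ω, δ * N1fun (X1 ω) ≤ nrm ((X1 ω)ᵀ.mulVec x) := by
    intro ω
    rw [hNxeq]
    have h2 : N1fun (X1 ω) = ∑ i, ∑ j, X1 ω j i := by
      rw [N1fun]; exact Finset.sum_comm
    rw [h2, Finset.mul_sum]
    refine Finset.sum_le_sum fun i _ => ?_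
    rw [Finset.mul_sum]
    refine Finset.sum_le_sum fun j _ => ?_
    calc δ * X1 ω j i = X1 ω j i * δ := mul_comm _ _
    _ ≤ X1 ω j i * x j := mul_le_mul_of_nonneg_left (hδle j) ((hS ω).1 j i)
  have hc : ∀ ω, V1fun (X1 ω) ≤ nrm ((X1 ω)ᵀ.mulVec x) := by
    intro ω
    have hV : ∀ j, V1fun (X1 ω) ≤ ∑ i, X1 ω j i := by
      intro j
      refine csInf_le ⟨0, ?_⟩ ⟨j, rfl⟩
      rintro r ⟨i, rfl⟩
      exact Finset.sum_nonneg fun k _ => (hS ω).1 i k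
    calc V1fun (X1 ω) = V1fun (X1 ω) * ∑ j, x j := by rw [hxsum, mul_one]
    _ = ∑ j, V1fun (X1 ω) * x j := Finset.mul_sum _ _ _
    _ ≤ ∑ j, (∑ i, X1 ω j i) * x j :=
        Finset.sum_le_sum fun j _ => mul_le_mul_of_nonneg_right (hV j) (hxpos j).le
    _ = ∑ j, ∑ i, X1 ω j i * x j := by
        exact Finset.sum_congr rfl fun j _ => Finset.sum_mul _ _ _
    _ = ∑ i, ∑ j, X1 ω j i * x j := Finset.sum_comm
    _ = nrm ((X1 ω)ᵀ.mulVec x) := (hNxeq ω).symm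
  have hmono : ∀ s t : Set Ω, s ⊆ t → (P s).toReal ≤ (P t).toReal := fun s t h =>
    ENNReal.toReal_mono (measure_ne_top P t) (measure_mono h)
  have hfac : ∀ u : ℝ, 0 < u → 0 ≤ u ^ α / L u := fun u hu =>
    div_nonneg (Real.rpow_nonneg hu.le α) (hL.1 u hu).le
  have hcontP : ∀ c : ℝ, Tendsto (fun l : ℝ => c / l ^ α) (𝓝 (1:ℝ)) (𝓝 c) := by
    intro c
    have h : ContinuousAt (fun l : ℝ => c / l ^ α) 1 := by
      refine ContinuousAt.div continuousAt_const
        (Real.continuousAt_rpow_const 1 α (Or.inl one_ne_zero)) ?_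
      simp [Real.one_rpow]
    simpa [Real.one_rpow] using h.tendsto
  refine ⟨?_, ?_, ?_, ?_⟩
  · -- first limit
    rw [Metric.tendsto_nhds]
    intro ε hε
    obtain ⟨l, hld, hl1⟩ : ∃ l : ℝ, dist (cp / l ^ α) cp < ε / 2 ∧ 1 < l := by
      have h1 : ∀ᶠ l : ℝ in 𝓝[>] (1:ℝ), dist (cp / l ^ α) cp < ε / 2 :=
        ((hcontP cp).mono_left nhdsWithin_le_nhds).eventually
          (Metric.ball_mem_nhds cp (by positivity))
      exact (h1.and self_mem_nhdsWithin).exists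
    have hl0 : 0 < l := lt_trans one_pos hl1
    have hlow := tail_scale hα0 hL hi1 hl0
    have hHd := Metric.tendsto_nhds.mp hlow (ε/2) (half_pos hε)
    have hGd := Metric.tendsto_nhds.mp hi1 ε hε
    filter_upwards [hHd, hGd, eventually_ge_atTop ((-Real.log δ)/(l-1)),
      eventually_gt_atTop 0] with u h1 h2 h3 h4
    have hsub1 : {ω | Real.exp u < nrm ((X1 ω)ᵀ.mulVec x)} ⊆
        {ω | Real.exp u < N1fun (X1 ω)} := fun ω hω => lt_of_lt_of_le hω (ha ω)
    have hsub2 : {ω | Real.exp (l*u) < N1fun (X1 ω)} ⊆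
        {ω | Real.exp u < nrm ((X1 ω)ᵀ.mulVec x)} := by
      intro ω hω
      have hlu : -Real.log δ ≤ (l-1) * u := by
        rw [div_le_iff₀ (by linarith)] at h3; linarith [h3]
      have he : Real.exp u ≤ δ * Real.exp (l*u) := by
        calc Real.exp u ≤ Real.exp (Real.log δ + l*u) := by
              apply Real.exp_le_exp.mpr; linarith
        _ = δ * Real.exp (l*u) := by rw [Real.exp_add, Real.exp_log hδpos]
      calc Real.exp u ≤ δ * Real.exp (l*u) := he
      _ < δ * N1fun (X1 ω) := by
          exact mul_lt_mul_of_pos_left hω hδpos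
      _ ≤ nrm ((X1 ω)ᵀ.mulVec x) := hb ω
    have hFG : u ^ α / L u * (P {ω | Real.exp u < nrm ((X1 ω)ᵀ.mulVec x)}).toReal
        ≤ u ^ α / L u * (P {ω | Real.exp u < N1fun (X1 ω)}).toReal :=
      mul_le_mul_of_nonneg_left (hmono _ _ hsub1) (hfac u h4)
    have hHF : u ^ α / L u * (P {ω | Real.exp (l*u) < N1fun (X1 ω)}).toReal
        ≤ u ^ α / L u * (P {ω | Real.exp u < nrm ((X1 ω)ᵀ.mulVec x)}).toReal :=
      mul_le_mul_of_nonneg_left (hmono _ _ hsub2) (hfac u h4)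
    rw [Real.dist_eq, abs_sub_lt_iff] at h1 h2 ⊢
    constructor
    · linarith [hFG, h2.1]
    · linarith [hHF, h1.2, hld, (abs_sub_lt_iff.mp (by rwa [Real.dist_eq] at hld)).2]
  · -- second limit
    rw [Metric.tendsto_nhds]
    intro ε hε
    obtain ⟨l, hld, hl1, hl0⟩ : ∃ l : ℝ, dist (cm / l ^ α) cm < ε / 2 ∧ l < 1 ∧ 0 < l := by
      have h1 : ∀ᶠ l : ℝ in 𝓝[<] (1:ℝ), dist (cm / l ^ α) cm < ε / 2 :=
        ((hcontP cm).mono_left nhdsWithin_le_nhds).eventually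
          (Metric.ball_mem_nhds cm (by positivity))
      have h2 : ∀ᶠ l : ℝ in 𝓝[<] (1:ℝ), (0:ℝ) < l :=
        eventually_nhdsWithin_of_eventually_nhds (eventually_gt_nhds one_pos)
      exact ((h1.and self_mem_nhdsWithin).and h2).exists.imp
        fun l ⟨⟨a, b⟩, c⟩ => ⟨a, b, c⟩
    have hlow := tail_scale hα0 hL hi2 hl0
    have hHd := Metric.tendsto_nhds.mp hlow (ε/2) (half_pos hε)
    have hGd := Metric.tendsto_nhds.mp hi2 ε hε
    filter_upwards [hHd, hGd, eventually_ge_atTop ((-Real.log δ)/(1-l)),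
      eventually_gt_atTop 0] with u h1 h2 h3 h4
    have hsub1 : {ω | N1fun (X1 ω) ≤ Real.exp (-u)} ⊆
        {ω | nrm ((X1 ω)ᵀ.mulVec x) ≤ Real.exp (-u)} := fun ω hω => le_trans (ha ω) hω
    have hsub2 : {ω | nrm ((X1 ω)ᵀ.mulVec x) ≤ Real.exp (-u)} ⊆
        {ω | N1fun (X1 ω) ≤ Real.exp (-(l*u))} := by
      intro ω hω
      have hlu : -Real.log δ ≤ (1-l) * u := by
        rw [div_le_iff₀ (by linarith)] at h3; linarith [h3]
      have hN : δ * N1fun (X1 ω) ≤ Real.exp (-u) := le_trans (hb ω) hω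
      have he : Real.exp (-u) ≤ δ * Real.exp (-(l*u)) := by
        calc Real.exp (-u) ≤ Real.exp (Real.log δ + -(l*u)) := by
              apply Real.exp_le_exp.mpr; linarith
        _ = δ * Real.exp (-(l*u)) := by rw [Real.exp_add, Real.exp_log hδpos]
      have : δ * N1fun (X1 ω) ≤ δ * Real.exp (-(l*u)) := le_trans hN he
      exact le_of_mul_le_mul_left this hδpos
    have hGF : u ^ α / L u * (P {ω | N1fun (X1 ω) ≤ Real.exp (-u)}).toReal
        ≤ u ^ α / L u * (P {ω | nrm ((X1 ω)ᵀ.mulVec x) ≤ Real.exp (-u)}).toReal :=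
      mul_le_mul_of_nonneg_left (hmono _ _ hsub1) (hfac u h4)
    have hFH : u ^ α / L u * (P {ω | nrm ((X1 ω)ᵀ.mulVec x) ≤ Real.exp (-u)}).toReal
        ≤ u ^ α / L u * (P {ω | N1fun (X1 ω) ≤ Real.exp (-(l*u))}).toReal :=
      mul_le_mul_of_nonneg_left (hmono _ _ hsub2) (hfac u h4)
    rw [Real.dist_eq, abs_sub_lt_iff] at h1 h2 ⊢
    constructor
    · linarith [hFH, h1.1, (abs_sub_lt_iff.mp (by rwa [Real.dist_eq] at hld)).1]
    · linarith [hGF, h2.2]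
  · -- third: pointwise domination by N₁ tail
    intro u hu
    exact mul_le_mul_of_nonneg_left
      (hmono _ _ fun ω hω => lt_of_lt_of_le hω (ha ω)) (hfac u hu)
  · -- fourth: pointwise domination by V₁ tail
    intro u hu
    exact mul_le_mul_of_nonneg_left
      (hmono _ _ fun ω hω => le_trans (hc ω) hω) (hfac u hu)

end StablePaper
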